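/- arXiv:2307.10880 — 3 statements merged into one kernel-verified Lean document; each statement's English description precedes it below -/
import Mathlib

section
/- Let Λ be a full-rank lattice in ℝ^n and let s be a nonnegative integer with s ≤ n/2. Then the inhomogeneous minimum satisfies M_s(Λ) ≤ 2^{s−n} · μ_n(Λ)^n. -/
open Finset

section Helpers

private lemma cov_lemma (m : ℕ) : ∀ {E : Type} [NormedAddCommGroup E] [InnerProductSpace ℝ E]
    (v : Fin m → E) (u : E), u ∈ Submodule.span ℝ (Set.range v) →
    ∃ x ∈ Submodule.span ℤ (Set.range v), ‖u - x‖ ^ 2 ≤ (∑ i, ‖v i‖ ^ 2) / 4 := by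
  induction m with
  | zero =>
    intro E _ _ v u hu
    refine ⟨0, Submodule.zero_mem _, ?_⟩
    rw [Set.range_eq_empty, Submodule.span_empty, Submodule.mem_bot] at hu
    simp [hu]
  | succ m ih =>
    intro E _ _ v u hu
    have hrange : Set.range v = insert (v (Fin.last m)) (Set.range (v ∘ Fin.castSucc)) := by
      ext x
      simp only [Set.mem_range, Set.mem_insert_iff, Function.comp_apply]
      constructor
      · rintro ⟨i, rfl⟩
        rcases Fin.eq_castSucc_or_eq_last i with ⟨j, rfl⟩ | rfl
        · exact Or.inr ⟨j, rfl⟩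
        · exact Or.inl rfl
      · rintro (rfl | ⟨j, rfl⟩)
        exacts [⟨Fin.last m, rfl⟩, ⟨Fin.castSucc j, rfl⟩]
    rw [hrange, Submodule.mem_span_insert] at hu
    obtain ⟨t, a, ha, rfl⟩ := hu
    set K : Submodule ℝ E := Submodule.span ℝ (Set.range (v ∘ Fin.castSucc)) with hK
    haveI : FiniteDimensional ℝ K := FiniteDimensional.span_of_finite ℝ (Set.finite_range _)
    set vl := v (Fin.last m) with hvl
    set p : E := (K.orthogonalProjectionOnto vl : E) with hp
    set w : E := vl - p with hw
    have hwK : w ∈ Kᗮ := by have := K.sub_starProjection_mem_orthogonal vl; rwa [Submodule.starProjection_apply] at this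
    set k : ℤ := round t with hk
    have hpK : p ∈ K := (K.orthogonalProjectionOnto vl).2
    have ha' : a + (t - k) • p ∈ K := K.add_mem ha (K.smul_mem _ hpK)
    obtain ⟨y, hy, hy2⟩ := ih (v ∘ Fin.castSucc) (a + (t - k) • p) ha'
    refine ⟨k • vl + y, ?_, ?_⟩
    · exact Submodule.add_mem _
        (Submodule.smul_mem _ k (Submodule.subset_span ⟨Fin.last m, rfl⟩))
        (Submodule.span_mono (by rw [hrange]; exact Set.subset_insert _ _) hy)
    · have hyK : y ∈ K := Submodule.span_subset_span ℤ ℝ _ hy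
      have key : t • vl + a - (k • vl + y) = (t - k) • w + (a + (t - k) • p - y) := by
        rw [hw]; module
      rw [key]
      have horth : (inner ℝ ((t - (k:ℝ)) • w) (a + (t - k) • p - y) : ℝ) = 0 := by
        rw [inner_smul_left]
        have : (inner ℝ w (a + (t - k) • p - y) : ℝ) = 0 := by
          rw [real_inner_comm]; exact hwK _ (K.sub_mem ha' hyK)
        rw [this, mul_zero]
      have hpyth : ‖(t - (k:ℝ)) • w + (a + (t - k) • p - y)‖ ^ 2
          = ‖(t - (k:ℝ)) • w‖ ^ 2 + ‖a + (t - k) • p - y‖ ^ 2 := by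
        rw [norm_add_sq_real, horth]; ring
      rw [hpyth]
      have hwle : ‖w‖ ≤ ‖vl‖ := by
        have hwp : (inner ℝ w p : ℝ) = 0 := by
          rw [real_inner_comm]; exact hwK _ hpK
        have hvn : ‖vl‖ ^ 2 = ‖w‖ ^ 2 + ‖p‖ ^ 2 := by
          have : vl = w + p := by rw [hw]; abel
          rw [this, norm_add_sq_real, hwp]; ring
        nlinarith [sq_nonneg ‖p‖, norm_nonneg w, norm_nonneg vl]
      have h1 : ‖(t - (k:ℝ)) • w‖ ^ 2 ≤ ‖vl‖ ^ 2 / 4 := by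
        rw [norm_smul, Real.norm_eq_abs, mul_pow]
        have habs : |t - (k:ℝ)| ≤ 1/2 := abs_sub_round t
        have h2 : |t - (k:ℝ)| ^ 2 ≤ (1/2:ℝ) ^ 2 := pow_le_pow_left₀ (abs_nonneg _) habs 2
        have h3 : ‖w‖ ^ 2 ≤ ‖vl‖ ^ 2 := pow_le_pow_left₀ (norm_nonneg _) hwle 2
        have := mul_le_mul h2 h3 (sq_nonneg ‖w‖) (by positivity)
        linarith
      have hsum : ∑ i, ‖v i‖ ^ 2 = (∑ i : Fin m, ‖v (Fin.castSucc i)‖ ^ 2) + ‖vl‖ ^ 2 :=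
        Fin.sum_univ_castSucc _
      simp only [Function.comp_apply] at hy2
      rw [hsum]
      linarith

private lemma prod_range_two_mul' {M : Type*} [CommMonoid M] (s : ℕ) (g : ℕ → M) :
    ∏ i ∈ range (2 * s), g i = ∏ j ∈ range s, (g (2 * j) * g (2 * j + 1)) := by
  induction s with
  | zero => simp
  | succ s ih =>
    have : 2 * (s + 1) = (2 * s) + 1 + 1 := by ring
    rw [this, prod_range_succ, prod_range_succ, ih, prod_range_succ, mul_assoc]

private lemma sum_range_two_mul' (s : ℕ) (g : ℕ → ℝ) :
    ∑ i ∈ range (2 * s), g i = ∑ j ∈ range s, (g (2 * j) + g (2 * j + 1)) := by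
  induction s with
  | zero => simp
  | succ s ih =>
    have : 2 * (s + 1) = (2 * s) + 1 + 1 := by ring
    rw [this, sum_range_succ, sum_range_succ, ih, sum_range_succ]
    ring

end Helpers

noncomputable def NsFun (n s : ℕ) (u : EuclideanSpace ℝ (Fin n)) : ℝ :=
  (∏ i ∈ Finset.range (n - 2 * s), |if h : i < n then u ⟨i, h⟩ else 0|) *
    ∏ j ∈ Finset.range s,
      ((if h : n - 2 * s + 2 * j < n then u ⟨n - 2 * s + 2 * j, h⟩ else 0) ^ 2 +
       (if h : n - 2 * s + 2 * j + 1 < n then u ⟨n - 2 * s + 2 * j + 1, h⟩ else 0) ^ 2)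

/-- The full-rank lattice in `ℝ^n` spanned over `ℤ` by the `ℝ`-basis `B`. -/
noncomputable def latticeOf {n : ℕ} (B : Module.Basis (Fin n) ℝ (EuclideanSpace ℝ (Fin n))) :
    Set (EuclideanSpace ℝ (Fin n)) :=
  (Submodule.span ℤ (Set.range ⇑B) : Submodule ℤ (EuclideanSpace ℝ (Fin n)))

/-- The `k`-th successive minimum of `L ⊆ ℝ^n`: the smallest `μ` such that `L` contains `k`
linearly independent vectors of norm at most `μ`. -/
noncomputable def succMin (n k : ℕ) (L : Set (EuclideanSpace ℝ (Fin n))) : ℝ :=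
  sInf {μ : ℝ | ∃ v : Fin k → EuclideanSpace ℝ (Fin n),
    (∀ i, v i ∈ L ∧ ‖v i‖ ≤ μ) ∧ LinearIndependent ℝ v}

/-- The homogeneous minimum `m_s(L) = inf_{x ∈ L, x ≠ 0} N_s(x)`. -/
noncomputable def homMin (n s : ℕ) (L : Set (EuclideanSpace ℝ (Fin n))) : ℝ :=
  sInf {t : ℝ | ∃ x ∈ L, x ≠ 0 ∧ t = NsFun n s x}

/-- The inhomogeneous minimum `M_s(L) = sup_{u ∈ ℝ^n} inf_{x ∈ L} N_s(u − x)`. -/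
noncomputable def inhomMin (n s : ℕ) (L : Set (EuclideanSpace ℝ (Fin n))) : ℝ :=
  sSup {t : ℝ | ∃ u : EuclideanSpace ℝ (Fin n),
    t = sInf {c : ℝ | ∃ x ∈ L, c = NsFun n s (u - x)}}

private lemma nsFun_nonneg (n s : ℕ) (u : EuclideanSpace ℝ (Fin n)) : 0 ≤ NsFun n s u := by
  unfold NsFun
  apply mul_nonneg
  · exact Finset.prod_nonneg fun i _ => abs_nonneg _
  · exact Finset.prod_nonneg fun j _ => by positivity

private lemma ns_sq_le (n s : ℕ) (hn : 0 < n) (hs : 2 * s ≤ n) (u : EuclideanSpace ℝ (Fin n)) :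
    (NsFun n s u) ^ 2 ≤ 4 ^ s * (‖u‖ ^ 2 / n) ^ n := by
  set r := n - 2 * s with hr
  have hn' : n = r + 2 * s := by omega
  set f : ℕ → ℝ := fun i => if h : i < n then u ⟨i, h⟩ else 0 with hf
  set y : ℕ → ℝ := fun j => f (r + 2 * j) ^ 2 + f (r + 2 * j + 1) ^ 2 with hy
  have hNs : NsFun n s u = (∏ i ∈ range r, |f i|) * ∏ j ∈ range s, y j := rfl
  set z : ℕ → ℝ := fun i => if i < r then f i ^ 2 else y ((i - r) / 2) / 2 with hz
  have hznn : ∀ i ∈ range n, (0:ℝ) ≤ z i := by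
    intro i _
    simp only [hz]
    split
    · positivity
    · have : (0:ℝ) ≤ y ((i - r)/2) := by simp only [hy]; positivity
      linarith
  have hprod : ∏ i ∈ range n, z i = ((∏ i ∈ range r, f i ^ 2) * ∏ j ∈ range s, (y j / 2) ^ 2) := by
    rw [hn', prod_range_add, prod_range_two_mul' s (fun i => z (r + i))]
    congr 1
    · exact Finset.prod_congr rfl fun i hi => by
        simp only [hz, if_pos (mem_range.mp hi)]
    · refine Finset.prod_congr rfl fun j hj => ?_
      have h1 : ¬ (r + 2 * j < r) := by omega
      have h2 : ¬ (r + (2 * j + 1) < r) := by omega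
      simp only [hz, if_neg h1, if_neg h2]
      have e1 : (r + 2 * j - r) / 2 = j := by omega
      have e2 : (r + (2 * j + 1) - r) / 2 = j := by omega
      rw [e1, e2]
      ring
  have hsumf : ∑ i ∈ range n, f i ^ 2 = ‖u‖ ^ 2 := by
    have : ‖u‖ = Real.sqrt (∑ i : Fin n, ‖u i‖ ^ 2) := EuclideanSpace.norm_eq u
    rw [this, Real.sq_sqrt (by positivity)]
    rw [← Fin.sum_univ_eq_sum_range (fun i => f i ^ 2) n]
    refine Finset.sum_congr rfl fun i _ => ?_
    simp only [hf, Real.norm_eq_abs, sq_abs, dif_pos i.isLt]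
  have hsum : ∑ i ∈ range n, z i = ‖u‖ ^ 2 := by
    rw [← hsumf]
    conv_rhs => rw [hn']
    rw [hn', sum_range_add, sum_range_add, sum_range_two_mul' s (fun i => z (r + i)),
      sum_range_two_mul' s (fun i => f (r + i) ^ 2)]
    congr 1
    · exact Finset.sum_congr rfl fun i hi => by
        simp only [hz, if_pos (mem_range.mp hi)]
    · refine Finset.sum_congr rfl fun j hj => ?_
      have h1 : ¬ (r + 2 * j < r) := by omega
      have h2 : ¬ (r + (2 * j + 1) < r) := by omega
      simp only [hz, if_neg h1, if_neg h2]
      have e1 : (r + 2 * j - r) / 2 = j := by omega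
      have e2 : (r + (2 * j + 1) - r) / 2 = j := by omega
      rw [e1, e2]
      simp only [hy]
      ring
  have hne : (n:ℝ) ≠ 0 := Nat.cast_ne_zero.mpr hn.ne'
  have hamgm := Real.geom_mean_le_arith_mean_weighted (range n) (fun _ => (n:ℝ)⁻¹) z
    (fun i _ => by positivity)
    (by rw [Finset.sum_const, card_range, nsmul_eq_mul, mul_inv_cancel₀ hne]) hznn
  rw [Real.finset_prod_rpow _ _ hznn] at hamgm
  have hsum' : ∑ i ∈ range n, (n:ℝ)⁻¹ * z i = ‖u‖ ^ 2 / n := by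
    rw [← Finset.mul_sum, hsum]; ring
  rw [hsum'] at hamgm
  have hprodnn : (0:ℝ) ≤ ∏ i ∈ range n, z i := Finset.prod_nonneg hznn
  have hzle : ∏ i ∈ range n, z i ≤ (‖u‖ ^ 2 / n) ^ n := by
    have h2 := Real.rpow_le_rpow (Real.rpow_nonneg hprodnn _) hamgm (Nat.cast_nonneg n)
    rwa [← Real.rpow_mul hprodnn, inv_mul_cancel₀ hne, Real.rpow_one,
      Real.rpow_natCast] at h2
  have hNsq : (NsFun n s u) ^ 2 = 4 ^ s * ∏ i ∈ range n, z i := by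
    rw [hNs, hprod, mul_pow, ← Finset.prod_pow, ← Finset.prod_pow]
    have : ∀ j ∈ range s, (y j / 2) ^ 2 = (y j) ^ 2 / 4 := fun j _ => by ring
    rw [Finset.prod_congr rfl this, Finset.prod_div_distrib, Finset.prod_const, card_range]
    have : ∀ i ∈ range r, |f i| ^ 2 = f i ^ 2 := fun i _ => sq_abs _
    rw [Finset.prod_congr rfl this]
    field_simp
  rw [hNsq]
  exact mul_le_mul_of_nonneg_left hzle (by positivity)

/-- Lemma 2.4: for a full-rank lattice `Λ ⊆ ℝ^n` and `0 ≤ s ≤ n/2`, the inhomogeneous minimum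
satisfies `M_s(Λ) ≤ 2^{s−n} · μ_n(Λ)^n`. -/
theorem inhomMin_le_succMin_n (n s : ℕ) (hs : 2 * s ≤ n)
    (B : Module.Basis (Fin n) ℝ (EuclideanSpace ℝ (Fin n))) :
    inhomMin n s (latticeOf B) ≤
      (2 : ℝ) ^ ((s : ℝ) - n) * succMin n n (latticeOf B) ^ n := by
  set L : Set (EuclideanSpace ℝ (Fin n)) := latticeOf B with hL
  have hL0 : (0 : EuclideanSpace ℝ (Fin n)) ∈ L := Submodule.zero_mem _
  rcases Nat.eq_zero_or_pos n with hn | hn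
  · -- n = 0 case
    subst hn
    have hs0 : s = 0 := by omega
    subst hs0
    have hNs1 : ∀ v : EuclideanSpace ℝ (Fin 0), NsFun 0 0 v = 1 := by
      intro v; simp [NsFun]
    have hRHS : (2 : ℝ) ^ ((0 : ℕ) - (0:ℕ) : ℝ) * succMin 0 0 L ^ 0 = 1 := by
      norm_num
    rw [inhomMin]
    apply Real.sSup_le
    · rintro t ⟨u, rfl⟩
      have hmem : (1:ℝ) ∈ {c : ℝ | ∃ x ∈ L, c = NsFun 0 0 (u - x)} := ⟨0, hL0, (hNs1 _).symm⟩
      have hbdd : BddBelow {c : ℝ | ∃ x ∈ L, c = NsFun 0 0 (u - x)} := by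
        refine ⟨0, ?_⟩
        rintro c ⟨x, _, rfl⟩
        exact nsFun_nonneg _ _ _
      calc sInf {c : ℝ | ∃ x ∈ L, c = NsFun 0 0 (u - x)} ≤ 1 := csInf_le hbdd hmem
        _ = _ := by rw [hRHS]
    · rw [hRHS]; norm_num
  -- main case n ≥ 1
  set S : Set ℝ := {μ : ℝ | ∃ v : Fin n → EuclideanSpace ℝ (Fin n),
    (∀ i, v i ∈ L ∧ ‖v i‖ ≤ μ) ∧ LinearIndependent ℝ v} with hS
  have hSnonneg : ∀ μ ∈ S, (0:ℝ) ≤ μ := by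
    rintro μ ⟨v, hv, _⟩
    exact le_trans (norm_nonneg (v ⟨0, hn⟩)) (hv ⟨0, hn⟩).2
  have hSne : S.Nonempty := by
    refine ⟨∑ i, ‖B i‖, ⟨⇑B, fun i => ⟨Submodule.subset_span ⟨i, rfl⟩, ?_⟩,
      B.linearIndependent⟩⟩
    exact Finset.single_le_sum (f := fun i => ‖B i‖) (fun j _ => norm_nonneg _)
      (Finset.mem_univ i)
  have hSbdd : BddBelow S := ⟨0, hSnonneg⟩
  set c : ℝ := succMin n n L with hc
  have hcS : c = sInf S := rfl
  have hc0 : 0 ≤ c := Real.sInf_nonneg hSnonneg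
  -- key bound for each μ ∈ S
  have key : ∀ μ ∈ S, ∀ u : EuclideanSpace ℝ (Fin n),
      sInf {c : ℝ | ∃ x ∈ L, c = NsFun n s (u - x)} ≤ 2 ^ s * μ ^ n / 2 ^ n := by
    rintro μ ⟨v, hv, hind⟩ u
    have hμ0 : (0:ℝ) ≤ μ := le_trans (norm_nonneg (v ⟨0, hn⟩)) (hv ⟨0, hn⟩).2
    haveI : Nonempty (Fin n) := ⟨⟨0, hn⟩⟩
    have htop : Submodule.span ℝ (Set.range v) = ⊤ :=
      hind.span_eq_top_of_card_eq_finrank (by simp)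
    obtain ⟨x, hx, hxle⟩ := cov_lemma n v u (by rw [htop]; trivial)
    have hxL : x ∈ L := by
      have hsub : Submodule.span ℤ (Set.range v) ≤ Submodule.span ℤ (Set.range ⇑B) := by
        rw [Submodule.span_le]
        rintro _ ⟨i, rfl⟩
        exact (hv i).1
      exact hsub hx
    have hsumle : (∑ i, ‖v i‖ ^ 2) ≤ n * μ ^ 2 := by
      calc ∑ i, ‖v i‖ ^ 2 ≤ ∑ _i : Fin n, μ ^ 2 :=
            Finset.sum_le_sum fun i _ => pow_le_pow_left₀ (norm_nonneg _) (hv i).2 2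
        _ = n * μ ^ 2 := by rw [Finset.sum_const, card_univ, Fintype.card_fin, nsmul_eq_mul]
    have hdist : ‖u - x‖ ^ 2 ≤ n * μ ^ 2 / 4 := le_trans hxle (by linarith)
    have hnsq := ns_sq_le n s hn hs (u - x)
    have hstep : (‖u - x‖ ^ 2 / n) ^ n ≤ (μ ^ 2 / 4) ^ n := by
      apply pow_le_pow_left₀ (by positivity)
      have hnpos : (0:ℝ) < n := Nat.cast_pos.mpr hn
      rw [div_le_div_iff₀ hnpos (by norm_num : (0:ℝ) < 4)]
      nlinarith [hdist]
    have hNle : NsFun n s (u - x) ≤ 2 ^ s * μ ^ n / 2 ^ n := by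
      have hsq : (NsFun n s (u - x)) ^ 2 ≤ (2 ^ s * μ ^ n / 2 ^ n) ^ 2 := by
        have heq : (2 ^ s * μ ^ n / 2 ^ n : ℝ) ^ 2 = 4 ^ s * (μ ^ 2 / 4) ^ n := by
          have e1 : (4:ℝ) ^ s = (2 ^ s) ^ 2 := by
            rw [show (4:ℝ) = 2 ^ 2 from by norm_num, ← pow_mul, ← pow_mul, Nat.mul_comm]
          have e2 : ((μ ^ 2 / 4) : ℝ) ^ n = (μ ^ n) ^ 2 / (2 ^ n) ^ 2 := by
            rw [div_pow, show (4:ℝ) = 2 ^ 2 from by norm_num, ← pow_mul, ← pow_mul,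
              Nat.mul_comm 2 n, ← pow_mul, ← pow_mul, Nat.mul_comm]
          rw [e1, e2]; ring
        rw [heq]
        exact le_trans hnsq (mul_le_mul_of_nonneg_left hstep (by positivity))
      have h2 : (0:ℝ) ≤ 2 ^ s * μ ^ n / 2 ^ n := by positivity
      exact (pow_le_pow_iff_left₀ (nsFun_nonneg n s (u - x)) h2 two_ne_zero).mp hsq
    have hbdd : BddBelow {c : ℝ | ∃ x ∈ L, c = NsFun n s (u - x)} := by
      refine ⟨0, ?_⟩
      rintro d ⟨x', _, rfl⟩
      exact nsFun_nonneg _ _ _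
    exact le_trans (csInf_le hbdd ⟨x, hxL, rfl⟩) hNle
  -- pass to the infimum over S
  have main : ∀ u : EuclideanSpace ℝ (Fin n),
      sInf {d : ℝ | ∃ x ∈ L, d = NsFun n s (u - x)} ≤ 2 ^ s * c ^ n / 2 ^ n := by
    intro u
    set I := sInf {d : ℝ | ∃ x ∈ L, d = NsFun n s (u - x)} with hI
    have hmono : ∀ μ, c < μ → I ≤ 2 ^ s * μ ^ n / 2 ^ n := by
      intro μ hμ
      obtain ⟨μ', hμ'S, hμ'lt⟩ := exists_lt_of_csInf_lt hSne (by rw [← hcS]; exact hμ)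
      have hμS : μ ∈ S := by
        obtain ⟨v, hv, hind⟩ := hμ'S
        exact ⟨v, fun i => ⟨(hv i).1, le_trans (hv i).2 hμ'lt.le⟩, hind⟩
      exact key μ hμS u
    have htend : Filter.Tendsto (fun μ : ℝ => 2 ^ s * μ ^ n / 2 ^ n)
        (nhdsWithin c (Set.Ioi c)) (nhds (2 ^ s * c ^ n / 2 ^ n)) := by
      apply Filter.Tendsto.mono_left _ nhdsWithin_le_nhds
      exact (Continuous.tendsto (by continuity) c)
    refine ge_of_tendsto htend ?_
    filter_upwards [self_mem_nhdsWithin] with μ hμ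
    exact hmono μ hμ
  -- conclude
  have hpow : (2:ℝ) ^ ((s:ℝ) - n) = 2 ^ s / 2 ^ n := by
    rw [Real.rpow_sub (by norm_num), Real.rpow_natCast, Real.rpow_natCast]
  rw [inhomMin]
  apply Real.sSup_le
  · rintro t ⟨u, rfl⟩
    calc sInf {d : ℝ | ∃ x ∈ L, d = NsFun n s (u - x)} ≤ 2 ^ s * c ^ n / 2 ^ n := main u
      _ = (2:ℝ) ^ ((s:ℝ) - n) * c ^ n := by rw [hpow]; ring
  · rw [hpow]
    positivity
end

section
/- Let K be an imaginary quadratic field (a number field of degree 2 with signature (0,1)) and let D_K be the absolute value of its discriminant. Then the Euclidean minimum satisfies M(K) ≤ D_K / 6. -/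
open NumberField

/-- The Euclidean minimum of a number field `K`:
`M(K) = sup_{α ∈ K} inf_{β ∈ ℤ_K} |Nm_{K/ℚ}(α − β)|`. -/
noncomputable def euclideanMinimum (K : Type*) [Field K] [NumberField K] : ℝ :=
  ⨆ α : K, ⨅ β : 𝓞 K, ((|Algebra.norm ℚ (α - (β : K))| : ℚ) : ℝ)

set_option maxHeartbeats 1000000 in
/-- Table 4.2 entry: if `K` is a imaginary quadratic field (degree `2`, signature `(0,1)`) and `D_K` is the absolute value of its discriminant,
then the Euclidean minimum satisfies the bound below. -/
theorem euclideanMinimum_le_imag_quadratic (K : Type*) [Field K] [NumberField K]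
    (hn : Module.finrank ℚ K = 2)
    (hr : InfinitePlace.nrRealPlaces K = 0) (hs : InfinitePlace.nrComplexPlaces K = 1)
    (DK : ℝ) (hD : DK = |(NumberField.discr K : ℝ)|) :
    euclideanMinimum K ≤ DK / 6 := by
  classical
  -- the two complex embeddings
  have hcard : Fintype.card (K →ₐ[ℚ] ℂ) = 2 := by rw [AlgHom.card, hn]
  obtain ⟨φ⟩ : Nonempty (K →ₐ[ℚ] ℂ) := by
    rw [← Fintype.card_pos_iff, hcard]; norm_num
  have hreal : ¬ ComplexEmbedding.IsReal (φ : K →+* ℂ) := by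
    intro h
    have hne : Nonempty {w : InfinitePlace K // w.IsReal} :=
      ⟨⟨InfinitePlace.mk (φ : K →+* ℂ), InfinitePlace.isReal_mk_iff.mpr h⟩⟩
    rw [← Fintype.card_pos_iff] at hne
    exact absurd hr hne.ne'
  let ψ : K →ₐ[ℚ] ℂ :=
    { toRingHom := (starRingEnd ℂ).comp (φ : K →+* ℂ)
      commutes' := fun q => by simp }
  have hψ : ∀ x : K, ψ x = starRingEnd ℂ (φ x) := fun x => rfl
  have hne : φ ≠ ψ := by
    intro h
    apply hreal
    rw [ComplexEmbedding.isReal_iff]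
    ext x
    have := congrArg (fun f : K →ₐ[ℚ] ℂ => f x) h
    simpa [hψ] using this.symm
  have huniv : (Finset.univ : Finset (K →ₐ[ℚ] ℂ)) = {φ, ψ} := by
    symm
    apply Finset.eq_univ_of_card
    rw [Finset.card_pair hne, hcard]
  -- trace and norm formulas
  have htr : ∀ x : K, ((Algebra.trace ℚ K x : ℚ) : ℂ) = φ x + starRingEnd ℂ (φ x) := by
    intro x
    have h := trace_eq_sum_embeddings (K := ℚ) (L := K) (E := ℂ) (x := x)
    rw [huniv, Finset.sum_pair hne, eq_ratCast] at h
    rw [h, hψ]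
  have hnormC : ∀ x : K, ((Algebra.norm ℚ x : ℚ) : ℝ) = Complex.normSq (φ x) := by
    intro x
    have h := Algebra.norm_eq_prod_embeddings ℚ ℂ x
    rw [huniv, Finset.prod_pair hne, eq_ratCast, hψ, Complex.mul_conj] at h
    exact_mod_cast h
  have habs : ∀ x : K, ((|Algebra.norm ℚ x| : ℚ) : ℝ) = Complex.normSq (φ x) := by
    intro x
    rw [Rat.cast_abs, hnormC x, abs_of_nonneg (Complex.normSq_nonneg _)]
  -- norms of nonzero integers are at least 1
  have hint : ∀ β : 𝓞 K, β ≠ 0 → 1 ≤ Complex.normSq (φ (β : K)) := by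
    intro β hβ
    have h1 : algebraMap ℤ ℚ (Algebra.intNorm ℤ (𝓞 K) β) = Algebra.norm ℚ (β : K) := by
      rw [Algebra.algebraMap_intNorm (L := K)]
    have h2 : Algebra.intNorm ℤ (𝓞 K) β ≠ 0 := by
      rw [Algebra.intNorm_ne_zero]; exact hβ
    have h3 : (1 : ℚ) ≤ |Algebra.norm ℚ (β : K)| := by
      rw [← h1]
      have : (1 : ℤ) ≤ |Algebra.intNorm ℤ (𝓞 K) β| := Int.one_le_abs h2
      calc (1:ℚ) = ((1:ℤ):ℚ) := by norm_num
      _ ≤ ((|Algebra.intNorm ℤ (𝓞 K) β| : ℤ) : ℚ) := by exact_mod_cast this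
      _ = |algebraMap ℤ ℚ (Algebra.intNorm ℤ (𝓞 K) β)| := by
          rw [eq_intCast, Int.cast_abs]
    rw [← habs]
    exact_mod_cast h3
  -- an integral basis indexed by `Fin 2`
  have hcardI : Fintype.card (Module.Free.ChooseBasisIndex ℤ (𝓞 K)) = 2 := by
    rw [← Module.finrank_eq_card_chooseBasisIndex, RingOfIntegers.rank, hn]
  obtain ⟨b⟩ : Nonempty (Module.Basis (Fin 2) ℤ (𝓞 K)) :=
    ⟨(RingOfIntegers.basis K).reindex (Fintype.equivFinOfCardEq hcardI)⟩
  obtain ⟨c0, hc0⟩ : ∃ n : ℤ, (b.repr 1) 0 = n := ⟨_, rfl⟩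
  obtain ⟨c1, hc1⟩ : ∃ n : ℤ, (b.repr 1) 1 = n := ⟨_, rfl⟩
  have hsum : (c0 : 𝓞 K) * b 0 + (c1 : 𝓞 K) * b 1 = 1 := by
    have h := b.sum_repr 1
    rw [Fin.sum_univ_two, hc0, hc1] at h
    simpa [zsmul_eq_mul] using h
  -- `gcd c0 c1` is a unit
  obtain ⟨u0, hu0⟩ : ((Int.gcd c0 c1 : ℤ)) ∣ c0 := Int.gcd_dvd_left c0 c1
  obtain ⟨u1, hu1⟩ : ((Int.gcd c0 c1 : ℤ)) ∣ c1 := Int.gcd_dvd_right c0 c1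
  have hu0' : ((c0 : ℤ) : 𝓞 K) = ((Int.gcd c0 c1 : ℤ) : 𝓞 K) * (u0 : 𝓞 K) := by
    exact_mod_cast congrArg (fun n : ℤ => (n : 𝓞 K)) hu0
  have hu1' : ((c1 : ℤ) : 𝓞 K) = ((Int.gcd c0 c1 : ℤ) : 𝓞 K) * (u1 : 𝓞 K) := by
    exact_mod_cast congrArg (fun n : ℤ => (n : 𝓞 K)) hu1
  have hgu : ((Int.gcd c0 c1 : ℤ) : 𝓞 K) * ((u0 : 𝓞 K) * b 0 + (u1 : 𝓞 K) * b 1) = 1 := by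
    rw [← hsum]
    linear_combination (b 0) * hu0'.symm + (b 1) * hu1'.symm
  have hgunit : IsUnit ((Int.gcd c0 c1 : ℤ) : 𝓞 K) := IsUnit.of_mul_eq_one _ hgu
  have hgcd1 : Int.gcd c0 c1 = 1 := by
    have h2 : IsUnit (Algebra.norm ℤ ((Int.gcd c0 c1 : ℤ) : 𝓞 K)) := hgunit.map (Algebra.norm ℤ)
    have h3 : Algebra.norm ℤ ((Int.gcd c0 c1 : ℤ) : 𝓞 K) = (Int.gcd c0 c1 : ℤ) ^ 2 := by
      have h4 := Algebra.norm_algebraMap_of_basis b (Int.gcd c0 c1 : ℤ)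
      simpa using h4
    rw [h3] at h2
    have hg0 : (0 : ℤ) ≤ (Int.gcd c0 c1 : ℤ) := Int.ofNat_nonneg _
    rcases Int.isUnit_iff.mp h2 with h | h
    · have hms : (Int.gcd c0 c1 : ℤ) * (Int.gcd c0 c1 : ℤ) = 1 := by rw [← pow_two]; exact h
      rcases mul_self_eq_one_iff.mp hms with h' | h' <;> omega
    · nlinarith [sq_nonneg ((Int.gcd c0 c1 : ℤ))]
  obtain ⟨u, v, huv⟩ : ∃ u v : ℤ, u * c0 + v * c1 = 1 := by
    obtain ⟨u, v, huv⟩ := Int.isCoprime_iff_gcd_eq_one.mpr hgcd1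
    exact ⟨u, v, huv⟩
  -- the auxiliary generator θ
  set θ : 𝓞 K := (u : 𝓞 K) * b 1 - (v : 𝓞 K) * b 0 with hθ
  clear_value θ
  have hc𝓞 : ((u : 𝓞 K)) * (c0 : 𝓞 K) + (v : 𝓞 K) * (c1 : 𝓞 K) = 1 := by
    exact_mod_cast congrArg (fun n : ℤ => (n : 𝓞 K)) huv
  have h0 : b 0 = (u : 𝓞 K) * 1 - (c1 : 𝓞 K) * θ := by
    rw [hθ]; linear_combination (u : 𝓞 K) * hsum - (b 0) * hc𝓞
  have h1 : b 1 = (v : 𝓞 K) * 1 + (c0 : 𝓞 K) * θ := by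
    rw [hθ]; linear_combination (v : 𝓞 K) * hsum - (b 1) * hc𝓞
  -- pass to ℂ
  set Φ : 𝓞 K →+* ℂ := (φ : K →+* ℂ).comp (algebraMap (𝓞 K) K) with hΦ
  have hΦc : ∀ β : 𝓞 K, Φ β = φ (β : K) := fun β => rfl
  set w0 : ℂ := Φ (b 0) with hw0
  set w1 : ℂ := Φ (b 1) with hw1
  set z : ℂ := Φ θ with hz
  have hzw : z = (u : ℂ) * w1 - (v : ℂ) * w0 := by
    rw [hz, hθ]
    simp only [map_sub, map_mul, map_intCast]
    rfl
  have hW0 : w0 = (u : ℂ) - (c1 : ℂ) * z := by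
    have h := congrArg Φ h0
    simp only [map_sub, map_mul, map_intCast, map_one, mul_one] at h
    rw [hw0, hz]
    rw [h]
  have hW1 : w1 = (v : ℂ) + (c0 : ℂ) * z := by
    have h := congrArg Φ h1
    simp only [map_add, map_mul, map_intCast, map_one, mul_one] at h
    rw [hw1, hz]
    rw [h]
  have hsumC : (c0 : ℂ) * w0 + (c1 : ℂ) * w1 = 1 := by
    have h := congrArg Φ hsum
    simp only [map_add, map_mul, map_intCast, map_one] at h
    rw [hw0, hw1]
    rw [h]
  -- the ℚ-basis of K induced by b
  set bK : Module.Basis (Fin 2) ℚ K := Module.Basis.localizationLocalization ℚ (nonZeroDivisors ℤ) K b with hbKdef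
  have hbK : ∀ i, bK i = algebraMap (𝓞 K) K (b i) := fun i =>
    Module.Basis.localizationLocalization_apply ℚ (nonZeroDivisors ℤ) K b i
  have hφbK0 : φ (bK 0) = w0 := by rw [hbK 0, hw0, hΦ]; rfl
  have hφbK1 : φ (bK 1) = w1 := by rw [hbK 1, hw1, hΦ]; rfl
  -- discriminant computation
  have hdisc1 : ((NumberField.discr K : ℚ)) = Algebra.discr ℚ bK := by
    rw [← NumberField.discr_eq_discr K b, hbKdef,
      Algebra.discr_localizationLocalization ℤ (nonZeroDivisors ℤ) K b, eq_intCast]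
  clear_value Φ w0 w1 z bK
  have hdisc2 : Algebra.discr ℚ bK =
      Algebra.trace ℚ K (bK 0 * bK 0) * Algebra.trace ℚ K (bK 1 * bK 1)
        - Algebra.trace ℚ K (bK 0 * bK 1) * Algebra.trace ℚ K (bK 1 * bK 0) := by
    rw [Algebra.discr_def, Matrix.det_fin_two]
    simp [Algebra.traceMatrix_apply, Algebra.traceForm_apply]
  have hdiscC : ((NumberField.discr K : ℚ) : ℂ) =
      (w0 * (starRingEnd ℂ w1) - (starRingEnd ℂ w0) * w1) ^ 2 := by
    rw [hdisc1, hdisc2]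
    push_cast
    rw [htr, htr, htr, htr]
    simp only [map_mul, hφbK0, hφbK1]
    ring
  -- relate to `z`
  have hsumC' : (c0 : ℂ) * (starRingEnd ℂ w0) + (c1 : ℂ) * (starRingEnd ℂ w1) = 1 := by
    have := congrArg (starRingEnd ℂ) hsumC
    simpa [map_add, map_mul] using this
  have hzw' : starRingEnd ℂ z = (u : ℂ) * (starRingEnd ℂ w1) - (v : ℂ) * (starRingEnd ℂ w0) := by
    rw [hzw]; simp [map_sub, map_mul]
  have hkey : w0 * (starRingEnd ℂ w1) - (starRingEnd ℂ w0) * w1 = starRingEnd ℂ z - z := by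
    have hcC : (u : ℂ) * (c0 : ℂ) + (v : ℂ) * (c1 : ℂ) = 1 := by exact_mod_cast huv
    rw [hzw', hzw]
    linear_combination ((u:ℂ) * (starRingEnd ℂ w1) - (v:ℂ) * (starRingEnd ℂ w0)) * hsumC
      - ((u:ℂ) * w1 - (v:ℂ) * w0) * hsumC'
      - (w0 * (starRingEnd ℂ w1) - (starRingEnd ℂ w0) * w1) * hcC
  have hconjz : starRingEnd ℂ z - z = (-(2 * z.im) : ℝ) * Complex.I := by
    apply Complex.ext <;> simp [Complex.conj_re, Complex.conj_im] <;> ring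
  have hdiscR : ((NumberField.discr K : ℝ)) = -(4 * z.im ^ 2) := by
    have : ((NumberField.discr K : ℚ) : ℂ) = ((-(4 * z.im ^ 2) : ℝ) : ℂ) := by
      rw [hdiscC, hkey, hconjz]
      rw [mul_pow, Complex.I_sq]
      push_cast
      ring
    have h2 : (((NumberField.discr K : ℝ)) : ℂ) = ((-(4 * z.im ^ 2) : ℝ) : ℂ) := by
      rw [← this]; norm_cast
    exact_mod_cast h2
  have hzim : z.im ≠ 0 := by
    intro h
    apply NumberField.discr_ne_zero K
    have : ((NumberField.discr K : ℝ)) = 0 := by rw [hdiscR, h]; ring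
    exact_mod_cast this
  -- lower bound on z.im
  have him : (3 : ℝ) / 4 ≤ z.im ^ 2 := by
    set m : ℤ := round z.re with hm
    have hθ' : (θ - (m : 𝓞 K)) ≠ 0 := by
      intro h
      apply hzim
      have : Φ (θ - (m : 𝓞 K)) = 0 := by rw [h, map_zero]
      rw [map_sub, map_intCast, ← hz] at this
      have := congrArg Complex.im this
      simpa using this
    have h1 : 1 ≤ Complex.normSq (φ ((θ - (m : 𝓞 K) : 𝓞 K) : K)) := hint _ hθ'
    have h2 : φ ((θ - (m : 𝓞 K) : 𝓞 K) : K) = z - (m : ℂ) := by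
      rw [← hΦc, map_sub, map_intCast, ← hz]
    rw [h2] at h1
    have h3 : Complex.normSq (z - (m : ℂ)) = (z.re - (m : ℝ)) ^ 2 + z.im ^ 2 := by
      simp [Complex.normSq_apply, Complex.sub_re, Complex.sub_im]
      ring
    have h4 : |z.re - (m : ℝ)| ≤ 1 / 2 := by
      rw [hm]; exact abs_sub_round z.re
    have h5 : (z.re - (m : ℝ)) ^ 2 ≤ 1 / 4 := by
      nlinarith [abs_nonneg (z.re - (m:ℝ)), sq_abs (z.re - (m:ℝ))]
    nlinarith [h1, h3]
  have hDK : DK = 4 * z.im ^ 2 := by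
    rw [hD, hdiscR]
    rw [abs_of_nonpos (by nlinarith [sq_nonneg z.im])]
    ring
  -- main bound : for every α there is β with small norm
  have main : ∀ α : K, ∃ β : 𝓞 K, ((|Algebra.norm ℚ (α - (β : K))| : ℚ) : ℝ) ≤ DK / 6 := by
    intro α
    set X : ℚ := bK.repr α 0 with hX
    set Y : ℚ := bK.repr α 1 with hY
    have hα : φ α = (X : ℂ) * w0 + (Y : ℂ) * w1 := by
      have h := bK.sum_repr α
      rw [Fin.sum_univ_two, ← hX, ← hY] at h
      have h2 := congrArg φ h
      rw [map_add, Algebra.smul_def, Algebra.smul_def, map_mul, map_mul,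
        AlgHom.commutes, AlgHom.commutes, hφbK0, hφbK1, eq_ratCast, eq_ratCast] at h2
      exact h2.symm
    set x : ℚ := X * (u : ℚ) + Y * (v : ℚ) with hx
    set y : ℚ := Y * (c0 : ℚ) - X * (c1 : ℚ) with hy
    have hαxy : φ α = (x : ℂ) + (y : ℂ) * z := by
      rw [hα, hW0, hW1, hx, hy]
      push_cast
      ring
    set n : ℤ := round y with hn'
    set t : ℝ := (x : ℝ) + ((y : ℝ) - (n : ℝ)) * z.re with ht
    set a : ℤ := round t with ha
    refine ⟨(a : 𝓞 K) + (n : 𝓞 K) * θ, ?_⟩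
    have hφβ : φ (((a : 𝓞 K) + (n : 𝓞 K) * θ : 𝓞 K) : K) = (a : ℂ) + (n : ℂ) * z := by
      rw [← hΦc, map_add, map_mul, map_intCast, map_intCast, ← hz]
    have hγ : φ (α - (((a : 𝓞 K) + (n : 𝓞 K) * θ : 𝓞 K) : K))
        = ((x : ℂ) - (a : ℂ)) + ((y : ℂ) - (n : ℂ)) * z := by
      rw [map_sub, hαxy, hφβ]; ring
    rw [habs, hγ]
    have hre : (((x : ℂ) - (a : ℂ)) + ((y : ℂ) - (n : ℂ)) * z).re = t - (a : ℝ) := by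
      simp [Complex.add_re, Complex.sub_re, Complex.mul_re, ht]
      push_cast
      ring
    have him' : (((x : ℂ) - (a : ℂ)) + ((y : ℂ) - (n : ℂ)) * z).im = ((y : ℝ) - (n : ℝ)) * z.im := by
      simp [Complex.add_im, Complex.sub_im, Complex.mul_im]
    rw [Complex.normSq_apply, hre, him']
    have hb1 : |t - (a : ℝ)| ≤ 1 / 2 := by rw [ha]; exact abs_sub_round t
    have hb2 : |(y : ℝ) - (n : ℝ)| ≤ 1 / 2 := by
      have := abs_sub_round y
      rw [hn']
      calc |(y : ℝ) - ((round y : ℤ) : ℝ)| = ((|y - round y| : ℚ) : ℝ) := by push_cast; ring_nf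
      _ ≤ ((1/2 : ℚ) : ℝ) := by exact_mod_cast this
      _ = 1/2 := by norm_num
    obtain ⟨hb1l, hb1r⟩ := abs_le.mp hb1
    obtain ⟨hb2l, hb2r⟩ := abs_le.mp hb2
    rw [hDK]
    have hq := him
    generalize z.im = q at *
    set T : ℝ := t - (a : ℝ) with hT
    set S : ℝ := (y : ℝ) - (n : ℝ) with hS
    clear_value T S
    have hsq1 : T ^ 2 ≤ 1 / 4 := by nlinarith
    have hsq2 : S ^ 2 ≤ 1 / 4 := by nlinarith
    have hmid : T * T + S * q * (S * q) ≤ 1 / 4 + 1 / 4 * q ^ 2 := by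
      nlinarith [sq_nonneg q, sq_nonneg S]
    nlinarith [hq, hmid]
  -- conclude
  have hDK6 : (0 : ℝ) ≤ DK / 6 := by rw [hD]; positivity
  apply ciSup_le
  intro α
  obtain ⟨β, hβ⟩ := main α
  refine le_trans (ciInf_le ?_ β) hβ
  refine ⟨0, ?_⟩
  rintro r ⟨β', rfl⟩
  positivity
end

section
/- Let K be a real quadratic field (a number field of degree 2 with signature (2,0)) and let D_K be the absolute value of its discriminant. Then the Euclidean minimum satisfies M(K) ≤ 2^{−1} · 3^{−1/2} · D_K^{1/2}. -/
open NumberField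

/-- Selection lemma: in every residue class mod 1 there is `m` with `|m^2 - c^2| ≤ max (1/4) c`. -/
lemma exists_int_abs_sq_sub_sq_le (τ c : ℝ) (hc : 0 ≤ c) :
    ∃ p : ℤ, |(τ - p) ^ 2 - c ^ 2| ≤ max (1 / 4) c := by
  rcases le_or_gt c 1 with h1 | h1
  · refine ⟨round τ, ?_⟩
    have h2 : |τ - round τ| ≤ 1 / 2 := abs_sub_round τ
    have hm : (τ - (round τ : ℝ)) ^ 2 ≤ 1 / 4 := by
      nlinarith [sq_abs (τ - (round τ : ℝ)), abs_nonneg (τ - (round τ : ℝ))]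
    have hm0 : 0 ≤ (τ - (round τ : ℝ)) ^ 2 := sq_nonneg _
    rcases le_or_gt c (1 / 2) with h3 | h3
    · refine le_trans (abs_le.2 ⟨?_, ?_⟩) (le_max_left _ _) <;> nlinarith
    · refine le_trans (abs_le.2 ⟨?_, ?_⟩) (le_max_right _ _) <;> nlinarith
  · have hcc : 0 ≤ c ^ 2 - c := by nlinarith
    set L := Real.sqrt (c ^ 2 - c) with hLdef
    have hL2 : L ^ 2 = c ^ 2 - c := Real.sq_sqrt hcc
    have hLnn : 0 ≤ L := Real.sqrt_nonneg _
    have hLle : L ≤ c - 1 / 2 := by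
      rw [hLdef]
      calc Real.sqrt (c ^ 2 - c) ≤ Real.sqrt ((c - 1 / 2) ^ 2) :=
            Real.sqrt_le_sqrt (by nlinarith)
        _ = c - 1 / 2 := Real.sqrt_sq (by linarith)
    refine ⟨⌊τ - L⌋, ?_⟩
    have h4 : (⌊τ - L⌋ : ℝ) ≤ τ - L := Int.floor_le _
    have h5 : τ - L - 1 < (⌊τ - L⌋ : ℝ) := by
      have := Int.lt_floor_add_one (τ - L); linarith
    set m := τ - (⌊τ - L⌋ : ℝ) with hmdef
    have hmL : L ≤ m := by rw [hmdef]; linarith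
    have hmU : m ≤ L + 1 := by rw [hmdef]; linarith
    have hsq1 : L ^ 2 ≤ m ^ 2 := by nlinarith
    have hsq2 : m ^ 2 ≤ (L + 1) ^ 2 := by nlinarith
    refine le_trans (abs_le.2 ⟨?_, ?_⟩) (le_max_right _ _) <;> nlinarith


/-- A real... ring of integers of a degree-2 field has a `ℤ`-basis starting with `1`. -/
lemma exists_basisZ (K : Type*) [Field K] [NumberField K]
    (hn : Module.finrank ℚ K = 2) :
    ∃ b : Module.Basis (Fin 2) ℤ (𝓞 K), b 0 = 1 := by
  have hrank : Module.finrank ℤ (𝓞 K) = 2 := by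
    rw [RingOfIntegers.rank]; exact hn
  have hcard : Fintype.card (Module.Free.ChooseBasisIndex ℤ (𝓞 K)) = 2 := by
    rw [← Module.finrank_eq_card_chooseBasisIndex]; exact hrank
  let b : Module.Basis (Fin 2) ℤ (𝓞 K) :=
    (Module.Free.chooseBasis ℤ (𝓞 K)).reindex (Fintype.equivFinOfCardEq hcard)
  have hone : b.repr 1 0 • b 0 + b.repr 1 1 • b 1 = 1 := by
    have := b.sum_repr 1
    rwa [Fin.sum_univ_two] at this
  set n0 : ℤ := b.repr 1 0 with hn0
  set n1 : ℤ := b.repr 1 1 with hn1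
  have hcop : IsCoprime n0 n1 := by
    rw [Int.isCoprime_iff_gcd_eq_one]
    by_contra hg
    set g : ℤ := (Int.gcd n0 n1 : ℤ) with hgdef
    have hgd0 : g ∣ n0 := Int.gcd_dvd_left _ _
    have hgd1 : g ∣ n1 := Int.gcd_dvd_right _ _
    have hgne : g ≠ 0 := by
      intro h0
      have h00 : n0 = 0 ∧ n1 = 0 := by
        rw [hgdef] at h0
        have : Int.gcd n0 n1 = 0 := by exact_mod_cast h0
        exact Int.gcd_eq_zero_iff.mp this
      rw [h00.1, h00.2, zero_smul, zero_smul, add_zero] at hone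
      exact zero_ne_one hone
    obtain ⟨z0, hz0⟩ := hgd0
    obtain ⟨z1, hz1⟩ := hgd1
    set z : 𝓞 K := z0 • b 0 + z1 • b 1 with hz
    have hgz : g • z = 1 := by
      rw [hz, smul_add, smul_smul, smul_smul, ← hz0, ← hz1]
      exact hone
    have hK : (g : K) * (z : K) = 1 := by
      have h := congrArg (algebraMap (𝓞 K) K) hgz
      rw [map_zsmul, map_one, zsmul_eq_mul] at h
      rw [RingOfIntegers.coe_eq_algebraMap]
      exact_mod_cast h
    have hgQ : ((g : ℚ) : K) = (g : K) := by push_cast; ring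
    have hzval : (z : K) = algebraMap ℚ K ((g : ℚ)⁻¹) := by
      have hgK : (g : K) ≠ 0 := by
        simpa using (Int.cast_ne_zero (α := K)).2 hgne
      rw [eq_ratCast (algebraMap ℚ K), Rat.cast_inv, hgQ, eq_comm,
        inv_eq_iff_eq_inv, eq_comm, inv_eq_of_mul_eq_one_right]
      rw [mul_comm]; exact hK
    have hint : IsIntegral ℤ ((g : ℚ)⁻¹) := by
      have h1 : IsIntegral ℤ ((z : K)) := by
        rw [RingOfIntegers.coe_eq_algebraMap]; exact z.isIntegral_coe
      rw [hzval] at h1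
      exact (isIntegral_algebraMap_iff ((algebraMap ℚ K).injective)).mp h1
    obtain ⟨k, hk⟩ := IsIntegrallyClosed.isIntegral_iff.mp hint
    have hgq0 : (g : ℚ) ≠ 0 := Int.cast_ne_zero.2 hgne
    have hkg : (k : ℚ) * (g : ℚ) = 1 := by
      have : (algebraMap ℤ ℚ k) = (k : ℚ) := by simp
      rw [this] at hk
      rw [hk, inv_mul_cancel₀ hgq0]
    have hkgZ : k * g = 1 := by exact_mod_cast hkg
    have : (0 : ℤ) ≤ g := by rw [hgdef]; positivity
    have hg1 : g = 1 := Int.eq_one_of_dvd_one this ⟨k, by linarith⟩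
    rw [hgdef] at hg1
    exact hg (by exact_mod_cast hg1)
  obtain ⟨x, y, hxy⟩ := hcop
  set ω : 𝓞 K := (-y) • b 0 + x • b 1 with hω
  have key0 : x • (1 : 𝓞 K) + (-n1) • ω = b 0 := by
    rw [← hone, hω]
    match_scalars
    · linear_combination hxy
    · ring
  have key1 : y • (1 : 𝓞 K) + n0 • ω = b 1 := by
    rw [← hone, hω]
    match_scalars
    · ring
    · linear_combination hxy
  have h1mem : (1 : 𝓞 K) ∈ Submodule.span ℤ (Set.range ![(1 : 𝓞 K), ω]) :=
    Submodule.subset_span ⟨0, rfl⟩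
  have hωmem : ω ∈ Submodule.span ℤ (Set.range ![(1 : 𝓞 K), ω]) :=
    Submodule.subset_span ⟨1, rfl⟩
  have hsp : ⊤ ≤ Submodule.span ℤ (Set.range ![(1 : 𝓞 K), ω]) := by
    rw [← b.span_eq]
    refine Submodule.span_le.2 ?_
    rintro _ ⟨i, rfl⟩
    fin_cases i
    · show b 0 ∈ Submodule.span ℤ (Set.range ![(1 : 𝓞 K), ω])
      rw [← key0]
      exact add_mem (Submodule.smul_mem _ _ h1mem) (Submodule.smul_mem _ _ hωmem)
    · show b 1 ∈ Submodule.span ℤ (Set.range ![(1 : 𝓞 K), ω])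
      rw [← key1]
      exact add_mem (Submodule.smul_mem _ _ h1mem) (Submodule.smul_mem _ _ hωmem)
  have hω0 : b.repr ω 0 = -y := by
    rw [hω, map_add, map_smul, map_smul]
    simp [Module.Basis.repr_self, Finsupp.single_apply]
  have hω1 : b.repr ω 1 = x := by
    rw [hω, map_add, map_smul, map_smul]
    simp [Module.Basis.repr_self, Finsupp.single_apply]
  have li : LinearIndependent ℤ ![(1 : 𝓞 K), ω] := by
    rw [LinearIndependent.pair_iff]
    intro s t hst
    have hst' : s • b.repr (1 : 𝓞 K) + t • b.repr ω = 0 := by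
      rw [← map_smul, ← map_smul, ← map_add, hst, map_zero]
    have e0 : s * n0 + t * (-y) = 0 := by
      have h := congrArg (fun F => F 0) hst'
      simp only [Finsupp.add_apply, Finsupp.smul_apply, smul_eq_mul,
        Finsupp.coe_zero, Pi.zero_apply] at h
      rw [hω0, ← hn0] at h
      exact h
    have e1 : s * n1 + t * x = 0 := by
      have h := congrArg (fun F => F 1) hst'
      simp only [Finsupp.add_apply, Finsupp.smul_apply, smul_eq_mul,
        Finsupp.coe_zero, Pi.zero_apply] at h
      rw [hω1, ← hn1] at h
      exact h
    constructor
    · linear_combination x * e0 + y * e1 - s * hxy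
    · linear_combination (-n1) * e0 + n0 * e1 - t * hxy
  refine ⟨Module.Basis.mk li hsp, ?_⟩
  rw [Module.Basis.mk_apply]
  rfl

set_option maxHeartbeats 2000000 in
/-- Table 4.2 entry: if `K` is a real quadratic field (degree `2`, signature `(2,0)`) and `D_K` is the absolute value of its discriminant,
then the Euclidean minimum satisfies the bound below. -/
theorem euclideanMinimum_le_real_quadratic (K : Type*) [Field K] [NumberField K]
    (hn : Module.finrank ℚ K = 2)
    (hr : InfinitePlace.nrRealPlaces K = 2) (hs : InfinitePlace.nrComplexPlaces K = 0)
    (DK : ℝ) (hD : DK = |(NumberField.discr K : ℝ)|) :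
    euclideanMinimum K ≤ 2⁻¹ * (3 : ℝ) ^ (-(1 : ℝ) / 2) * DK ^ ((1 : ℝ) / 2) := by
  classical
  obtain ⟨bZ, hbZ0⟩ := exists_basisZ K hn
  set ω : K := algebraMap (𝓞 K) K (bZ 1) with hωdef
  set bK : Module.Basis (Fin 2) ℚ K := bZ.localizationLocalization ℚ (nonZeroDivisors ℤ) K with hbKdef
  have hbK0 : bK 0 = 1 := by
    rw [hbKdef, Module.Basis.localizationLocalization_apply, hbZ0, map_one]
  have hbK1 : bK 1 = ω := by
    rw [hbKdef, Module.Basis.localizationLocalization_apply, hωdef]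
  set E : ℚ := bK.repr (ω * ω) 0 with hE
  set F : ℚ := bK.repr (ω * ω) 1 with hF
  have hω2 : ω * ω = E • (1 : K) + F • ω := by
    have h := bK.sum_repr (ω * ω)
    rw [Fin.sum_univ_two, hbK0, hbK1] at h
    exact h.symm
  -- representation of combinations
  have hrepr : ∀ u v : ℚ, (bK.repr (u • (1 : K) + v • ω) 0 = u) ∧
      (bK.repr (u • (1 : K) + v • ω) 1 = v) := by
    intro u v
    rw [← hbK0, ← hbK1, map_add, map_smul, map_smul]
    constructor <;> simp [Module.Basis.repr_self, Finsupp.single_apply]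
  -- norm formula
  have hnorm : ∀ u v : ℚ, Algebra.norm ℚ (u • (1 : K) + v • ω)
      = u ^ 2 + u * v * F - E * v ^ 2 := by
    intro u v
    rw [Algebra.norm_eq_matrix_det bK, Matrix.det_fin_two]
    have hmul0 : (u • (1 : K) + v • ω) * bK 0 = u • (1 : K) + v • ω := by
      rw [hbK0, mul_one]
    have hmul1 : (u • (1 : K) + v • ω) * bK 1 = (v * E) • (1 : K) + (u + v * F) • ω := by
      rw [hbK1, add_mul, smul_mul_assoc, smul_mul_assoc, one_mul, hω2]
      module
    simp only [Algebra.leftMulMatrix_eq_repr_mul, hmul0, hmul1]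
    rw [(hrepr u v).1, (hrepr u v).2, (hrepr (v * E) (u + v * F)).1,
      (hrepr (v * E) (u + v * F)).2]
    ring
  -- traces
  have htr1 : Algebra.trace ℚ K (1 : K) = 2 := by
    have h := Algebra.trace_algebraMap (R := ℚ) (S := K) (1 : ℚ)
    rw [map_one, hn] at h
    rw [h]; norm_num
  have hωcomb : ω = (0 : ℚ) • (1 : K) + (1 : ℚ) • ω := by module
  have htrω : Algebra.trace ℚ K ω = F := by
    rw [Algebra.trace_eq_matrix_trace bK, Matrix.trace_fin_two]
    simp only [Algebra.leftMulMatrix_eq_repr_mul]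
    rw [hbK0, hbK1, mul_one]
    nth_rewrite 1 [hωcomb]
    rw [(hrepr 0 1).1, ← hF, zero_add]
  have htrω2 : Algebra.trace ℚ K (ω * ω) = E * 2 + F * F := by
    rw [hω2, map_add, map_smul, map_smul, htr1, htrω]
    simp [smul_eq_mul]
  -- discriminant
  have hdiscr : ((NumberField.discr K : ℚ)) = F ^ 2 + 4 * E := by
    have h1 : Algebra.discr ℤ ⇑bZ = NumberField.discr K := NumberField.discr_eq_discr K bZ
    have h2 := Algebra.discr_localizationLocalization (R := ℤ) (Rₘ := ℚ) (Sₘ := K) (nonZeroDivisors ℤ) bZ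
    rw [h1] at h2
    rw [← hbKdef] at h2
    have h3 : ((NumberField.discr K : ℚ)) = Algebra.discr ℚ ⇑bK := by
      rw [h2]; simp [algebraMap_int_eq]
    rw [h3, Algebra.discr_def, Matrix.det_fin_two]
    simp only [Algebra.traceMatrix_apply, Algebra.traceForm_apply]
    rw [hbK0, hbK1]
    simp only [one_mul, mul_one]
    rw [htr1, htrω, htrω2]
    ring
  -- rational scalar action under ring homs to ℝ
  have hsm : ∀ (σ : K →+* ℝ) (q : ℚ) (z : K), σ (q • z) = (q : ℝ) * σ z := by
    intro σ q z
    rw [Algebra.smul_def, map_mul]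
    congr 1
    rw [eq_ratCast (algebraMap ℚ K) q, map_ratCast]
  have hquad : ∀ σ : K →+* ℝ, (σ ω) ^ 2 = (E : ℝ) + (F : ℝ) * σ ω := by
    intro σ
    have h1 := congrArg σ hω2
    rw [map_mul, map_add, hsm, hsm, map_one, mul_one] at h1
    rw [sq]; rw [h1]
  -- two distinct real embeddings
  have hcard2 : 1 < Fintype.card {w : InfinitePlace K // w.IsReal} := by
    have h := hr
    unfold InfinitePlace.nrRealPlaces at h
    omega
  obtain ⟨w1, w2, hww⟩ := Fintype.exists_pair_of_one_lt_card hcard2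
  set σ1 : K →+* ℝ := InfinitePlace.embedding_of_isReal w1.2 with hσ1
  set σ2 : K →+* ℝ := InfinitePlace.embedding_of_isReal w2.2 with hσ2
  have hσne : σ1 ω ≠ σ2 ω := by
    intro heq
    apply hww
    have hembeq : InfinitePlace.embedding w1.1 = InfinitePlace.embedding w2.1 := by
      ext x
      have hx := bK.sum_repr x
      rw [Fin.sum_univ_two, hbK0, hbK1] at hx
      have hσx : σ1 x = σ2 x := by
        rw [← hx, map_add, map_add, hsm, hsm, hsm, hsm, map_one σ1, map_one σ2, heq]
      have c1 := InfinitePlace.embedding_of_isReal_apply w1.2 x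
      have c2 := InfinitePlace.embedding_of_isReal_apply w2.2 x
      rw [← c1, ← c2, ← hσ1, ← hσ2, hσx]
    refine Subtype.ext ?_
    rw [← InfinitePlace.mk_embedding w1.1, hembeq, InfinitePlace.mk_embedding]
  set Dr : ℝ := (F : ℝ) ^ 2 + 4 * (E : ℝ) with hDr
  have hkey1 : (2 * σ1 ω - F) ^ 2 = Dr := by
    have h := hquad σ1
    rw [hDr]; linear_combination 4 * h
  have hkey2 : (2 * σ2 ω - F) ^ 2 = Dr := by
    have h := hquad σ2
    rw [hDr]; linear_combination 4 * h
  have hDrpos : 0 < Dr := by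
    rcases lt_or_eq_of_le (hkey1 ▸ sq_nonneg (2 * σ1 ω - F)) with h | h
    · exact h
    · exfalso
      apply hσne
      have e1 : 2 * σ1 ω - F = 0 := by
        have := hkey1; rw [← h] at this
        exact pow_eq_zero_iff (n := 2) (by norm_num) |>.mp this
      have e2 : 2 * σ2 ω - F = 0 := by
        have := hkey2; rw [← h] at this
        exact pow_eq_zero_iff (n := 2) (by norm_num) |>.mp this
      linarith
  have hDrcast : Dr = ((F ^ 2 + 4 * E : ℚ) : ℝ) := by rw [hDr]; push_cast; ring
  have hdiscr_pos : 0 < NumberField.discr K := by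
    have h1 : (0 : ℚ) < F ^ 2 + 4 * E := by
      rw [hDrcast] at hDrpos
      exact_mod_cast hDrpos
    rw [← hdiscr] at h1
    exact_mod_cast h1
  have hdiscrR : ((NumberField.discr K : ℝ)) = Dr := by
    rw [hDrcast, ← hdiscr]
    push_cast
    ring
  have hD1 : (1 : ℝ) ≤ Dr := by
    rw [← hdiscrR]
    exact_mod_cast hdiscr_pos
  have hDK : DK = Dr := by
    rw [hD, hdiscrR, abs_of_pos hDrpos]
  clear_value Dr
  -- numeric facts about √3
  have h3a : (1 : ℝ) ≤ Real.sqrt 3 := by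
    rw [show (1 : ℝ) = Real.sqrt 1 from (Real.sqrt_one).symm]
    exact Real.sqrt_le_sqrt (by norm_num)
  have h3b : Real.sqrt 3 ≤ 2 := by
    rw [show (2 : ℝ) = Real.sqrt 4 by
      rw [show (4 : ℝ) = 2 ^ 2 by norm_num, Real.sqrt_sq (by norm_num : (0:ℝ) ≤ 2)]]
    exact Real.sqrt_le_sqrt (by norm_num)
  set R : ℝ := Real.sqrt Dr with hRdef
  have hR0 : 0 ≤ R := Real.sqrt_nonneg _
  have hR2 : R ^ 2 = Dr := Real.sq_sqrt (by linarith)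
  clear_value R
  have hR1 : 1 ≤ R := by
    rw [hRdef, show (1 : ℝ) = Real.sqrt 1 from Real.sqrt_one.symm]
    exact Real.sqrt_le_sqrt hD1
  have hRHS : 2⁻¹ * (3 : ℝ) ^ (-(1 : ℝ) / 2) * DK ^ ((1 : ℝ) / 2) = R / (2 * Real.sqrt 3) := by
    rw [hDK, show (-(1 : ℝ) / 2) = -(1 / 2) by ring,
      Real.rpow_neg (by norm_num : (0 : ℝ) ≤ 3),
      ← Real.sqrt_eq_rpow, ← Real.sqrt_eq_rpow, hRdef]
    rw [eq_div_iff (by positivity)]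
    field_simp
  have hRHS0 : 0 ≤ 2⁻¹ * (3 : ℝ) ^ (-(1 : ℝ) / 2) * DK ^ ((1 : ℝ) / 2) := by
    rw [hRHS]; positivity
  unfold euclideanMinimum
  refine Real.iSup_le (fun α => ?_) hRHS0
  set A : ℚ := bK.repr α 0 with hA
  set B : ℚ := bK.repr α 1 with hB
  have hα : α = A • (1 : K) + B • ω := by
    have h := bK.sum_repr α
    rw [Fin.sum_univ_two, hbK0, hbK1] at h
    exact h.symm
  set q : ℤ := round B with hq
  set v : ℚ := B - q with hv
  have hvb : |(v : ℝ)| ≤ 1 / 2 := by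
    have h := abs_sub_round B
    have h2 : ((|B - ((round B : ℤ) : ℚ)| : ℚ) : ℝ) ≤ (((1 : ℚ)/2 : ℚ) : ℝ) :=
      Rat.cast_le.mpr h
    rw [hv, hq, ← Rat.cast_abs]
    simpa using h2
  set c : ℝ := Real.sqrt ((v : ℝ) ^ 2 * Dr / 4) with hc
  have hc0 : 0 ≤ c := Real.sqrt_nonneg _
  have hc2 : c ^ 2 = (v : ℝ) ^ 2 * Dr / 4 := Real.sq_sqrt (by positivity)
  clear_value c
  obtain ⟨p, hp⟩ := exists_int_abs_sq_sub_sq_le ((A : ℝ) + (v : ℝ) * (F : ℝ) / 2) c hc0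
  set u : ℚ := A - p with hu
  set β : 𝓞 K := p • (1 : 𝓞 K) + q • bZ 1 with hβ
  have hβK : (β : K) = (p : ℚ) • (1 : K) + (q : ℚ) • ω := by
    rw [RingOfIntegers.coe_eq_algebraMap, hβ, map_add, map_zsmul, map_zsmul, map_one, hωdef,
      Int.cast_smul_eq_zsmul ℚ, Int.cast_smul_eq_zsmul ℚ]
  have hdiff : α - (β : K) = u • (1 : K) + v • ω := by
    rw [hα, hβK, hu, hv]
    push_cast
    module
  refine ciInf_le_of_le ⟨0, ?_⟩ β ?_
  · rintro x ⟨γ, rfl⟩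
    positivity
  · rw [hdiff, hnorm u v]
    have hval : ((|u ^ 2 + u * v * F - E * v ^ 2| : ℚ) : ℝ)
        = |((A : ℝ) + (v : ℝ) * (F : ℝ) / 2 - p) ^ 2 - c ^ 2| := by
      rw [Rat.cast_abs]
      congr 1
      have h1 : ((u ^ 2 + u * v * F - E * v ^ 2 : ℚ) : ℝ)
          = ((A : ℝ) + (v : ℝ) * (F : ℝ) / 2 - p) ^ 2
            - (v : ℝ) ^ 2 * ((F : ℝ) ^ 2 + 4 * (E : ℝ)) / 4 := by
        rw [hu]; push_cast; ring
      rw [h1, hc2, hDr]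
    rw [hval, hRHS]
    refine le_trans hp ?_
    have hcR : c ≤ R / 4 := by
      have hv2 : (v : ℝ) ^ 2 ≤ 1 / 4 := by
        nlinarith [sq_abs (v : ℝ), abs_nonneg (v : ℝ), hvb]
      have h1 : (v : ℝ) ^ 2 * Dr / 4 ≤ (R / 4) ^ 2 := by
        rw [div_pow, hR2]
        nlinarith [mul_le_mul_of_nonneg_right hv2 hDrpos.le]
      calc c = Real.sqrt ((v : ℝ) ^ 2 * Dr / 4) := hc
        _ ≤ Real.sqrt ((R / 4) ^ 2) := Real.sqrt_le_sqrt h1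
        _ = R / 4 := Real.sqrt_sq (by positivity)
    have h3pos : (0 : ℝ) < Real.sqrt 3 := by linarith
    apply max_le
    · rw [le_div_iff₀ (by positivity : (0 : ℝ) < 2 * Real.sqrt 3)]
      nlinarith
    · refine le_trans hcR ?_
      rw [div_le_div_iff₀ (by norm_num) (by positivity : (0 : ℝ) < 2 * Real.sqrt 3)]
      nlinarith
end
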